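/- arXiv:1901.06664 — 9 statements merged into one kernel-verified Lean document; each statement's English description precedes it below -/
import Mathlib

section
/- Let (L,∨,∧,1) be a lattice with greatest element 1 and let * be a binary operation on L. Then (L,∨,∧,*) is a sectionally pseudocomplemented lattice if and only if (L,∨,∧,⊙,→,1) with ⊙ := ∧ and → := * is a divisible relatively residuated lattice. -/
/-- A lattice with 1 and binary operation * is sectionally
pseudocomplemented iff (L,∨,∧,⊓,*,1) is a divisible relatively residuated lattice. -/
theorem stmt_0 {L : Type*} [Lattice L] [OrderTop L] (star : L → L → L) :
    (∀ a b : L, IsGreatest {x : L | (a ⊔ b) ⊓ x = b} (star a b)) ↔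
      ((∀ x y : L, x ⊓ y = y ⊓ x) ∧
       (∀ x : L, x ⊓ (⊤ : L) = x) ∧
       (∀ a b c : L, a ≤ b → a ⊓ c ≤ b ⊓ c) ∧
       (∀ a b c : L, (a ⊔ b) ⊓ (c ⊔ b) ≤ b ↔ c ⊔ b ≤ star a b) ∧
       (∀ x y : L, (x ⊔ y) ⊓ star x y = y)) := by
  constructor
  · intro h
    refine ⟨fun x y => inf_comm x y, fun x => inf_top_eq x,
      fun a b c hab => inf_le_inf_right c hab, fun a b c => ?_, fun x y => (h x y).1⟩
    constructor
    · intro hle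
      have hmem : (a ⊔ b) ⊓ (c ⊔ b) = b :=
        le_antisymm hle (le_inf le_sup_right le_sup_right)
      exact (h a b).2 hmem
    · intro hle
      calc (a ⊔ b) ⊓ (c ⊔ b) ≤ (a ⊔ b) ⊓ star a b := inf_le_inf_left _ hle
        _ = b := (h a b).1
  · rintro ⟨-, -, -, hadj, hdiv⟩ a b
    refine ⟨hdiv a b, fun x hx => ?_⟩
    have hbx : b ≤ x := hx ▸ inf_le_right
    have : (a ⊔ b) ⊓ (x ⊔ b) ≤ b := by
      rw [sup_eq_left.mpr hbx]; exact hx.le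
    exact le_trans le_sup_left ((hadj a b x).1 this)
end

section
/- Let (L,∨,∧,1) be a finite lattice with greatest element 1. Then the following are equivalent: (i) there exists a binary operation * on L such that (L,∨,∧,⊙,→,1) with ⊙ := ∧ and → := * is a relatively residuated lattice; (ii) (L,∨,∧) is meet-semidistributive. -/
/-- For a finite lattice with 1, existence of * making
(L,∨,∧,⊓,*,1) relatively residuated is equivalent to meet-semidistributivity. -/
theorem stmt_1 {L : Type*} [Lattice L] [OrderTop L] [Fintype L] :
    (∃ star : L → L → L,
       (∀ x y : L, x ⊓ y = y ⊓ x) ∧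
       (∀ x : L, x ⊓ (⊤ : L) = x) ∧
       (∀ a b c : L, a ≤ b → a ⊓ c ≤ b ⊓ c) ∧
       (∀ a b c : L, (a ⊔ b) ⊓ (c ⊔ b) ≤ b ↔ c ⊔ b ≤ star a b)) ↔
      (∀ a b c : L, a ⊓ b = a ⊓ c → a ⊓ (b ⊔ c) = a ⊓ b) := by
  classical
  constructor
  · rintro ⟨star, -, -, -, hadj⟩ a b c habc
    set d := a ⊓ b with hd
    have hda : d ≤ a := inf_le_left
    have hdb : d ≤ b := inf_le_right
    have hdc : d ≤ c := habc ▸ inf_le_right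
    have had : a ⊔ d = a := sup_eq_left.mpr hda
    have hb : b ≤ star a d := by
      have h1 : (a ⊔ d) ⊓ (b ⊔ d) ≤ d := by
        rw [had, sup_eq_left.mpr hdb]
      exact le_trans le_sup_left ((hadj a d b).mp h1)
    have hc : c ≤ star a d := by
      have h1 : (a ⊔ d) ⊓ (c ⊔ d) ≤ d := by
        rw [had, sup_eq_left.mpr hdc]
        exact le_of_eq habc.symm
      exact le_trans le_sup_left ((hadj a d c).mp h1)
    have hbc : (b ⊔ c) ⊔ d ≤ star a d := sup_le (sup_le hb hc) (le_trans hdb hb)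
    have := (hadj a d (b ⊔ c)).mpr hbc
    rw [had, sup_eq_left.mpr (le_trans hdb le_sup_left)] at this
    exact le_antisymm this (le_inf hda (le_trans hdb le_sup_left))
  · intro hsd
    have key : ∀ a b : L, ∃ t : L, b ≤ t ∧ (a ⊔ b) ⊓ (t ⊔ b) ≤ b ∧
        ∀ x, (a ⊔ b) ⊓ (x ⊔ b) ≤ b → x ≤ t := by
      intro a b
      set s := Finset.univ.filter (fun x => (a ⊔ b) ⊓ (x ⊔ b) ≤ b) with hs
      have hbs : b ∈ s := by simp [hs]
      have hne : s.Nonempty := ⟨b, hbs⟩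
      refine ⟨s.sup' hne id, Finset.le_sup' id hbs, ?_, ?_⟩
      · refine Finset.sup'_induction hne id (fun x hx y hy => ?_) (fun x hx => by
          simpa [hs] using hx)
        have hbx : (a ⊔ b) ⊓ (x ⊔ b) = b :=
          le_antisymm hx (le_inf le_sup_right le_sup_right)
        have hby : (a ⊔ b) ⊓ (y ⊔ b) = b :=
          le_antisymm hy (le_inf le_sup_right le_sup_right)
        have := hsd (a ⊔ b) (x ⊔ b) (y ⊔ b) (hbx.trans hby.symm)
        have heq : (x ⊔ b) ⊔ (y ⊔ b) = (x ⊔ y) ⊔ b := by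
          rw [sup_sup_sup_comm, sup_idem]
        rw [heq, hbx] at this
        exact le_of_eq this
      · intro x hx
        exact Finset.le_sup' id (by simp [hs, hx])
    choose star h1 h2 h3 using key
    refine ⟨star, fun x y => inf_comm x y, fun x => inf_top_eq x,
      fun a b c h => inf_le_inf_right c h, fun a b c => ⟨fun h => sup_le (h3 a b c h) (h1 a b),
        fun h => ?_⟩⟩
    calc (a ⊔ b) ⊓ (c ⊔ b) ≤ (a ⊔ b) ⊓ (star a b ⊔ b) :=
          inf_le_inf_left _ (le_trans h le_sup_left)
      _ ≤ b := h2 a b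
end

section
/- In every relatively residuated lattice (L,∨,∧,⊙,→,1), the identity x→y = (x∨y)→y holds for all x,y ∈ L. -/
/-- In every relatively residuated lattice, x→y = (x∨y)→y. -/
theorem stmt_7 {L : Type*} [Lattice L] [OrderTop L] (mul imp : L → L → L)
    (hcomm : ∀ x y : L, mul x y = mul y x)
    (hone : ∀ x : L, mul x ⊤ = x)
    (hmono : ∀ a b c : L, a ≤ b → mul a c ≤ mul b c)
    (hadj : ∀ a b c : L, mul (a ⊔ b) (c ⊔ b) ≤ b ↔ c ⊔ b ≤ imp a b) :
    ∀ x y : L, imp x y = imp (x ⊔ y) y := by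
  intro x y
  have hmy : ∀ z : L, mul z y ≤ y := fun z => by
    calc mul z y = mul y z := hcomm z y
    _ ≤ mul y ⊤ := by rw [hcomm y z, hcomm y ⊤]; exact hmono z ⊤ y le_top
    _ = y := hone y
  have hyle : y ≤ imp x y := by
    have := (hadj x y y).mp (by simpa using hmy (x ⊔ y))
    simpa using this
  have hyle2 : y ≤ imp (x ⊔ y) y := by
    have := (hadj (x ⊔ y) y y).mp (by simpa using hmy (x ⊔ y ⊔ y))
    simpa using this
  have key : ∀ c : L, c ⊔ y ≤ imp x y ↔ c ⊔ y ≤ imp (x ⊔ y) y := by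
    intro c
    rw [← hadj, ← hadj, sup_assoc, sup_idem]
  apply le_antisymm
  · have := (key (imp x y)).mp (by simp [hyle])
    simpa [sup_eq_left.mpr hyle] using this
  · have := (key (imp (x ⊔ y) y)).mpr (by simp [hyle2])
    simpa [sup_eq_left.mpr hyle2] using this
end

section
/- In every relatively residuated lattice (L,∨,∧,⊙,→,1), for all a,b,c ∈ L, if a ≤ b then b→c ≤ a→c. -/
/-- In every relatively residuated lattice, a ≤ b implies b→c ≤ a→c. -/
theorem stmt_9 {L : Type*} [Lattice L] [OrderTop L] (mul imp : L → L → L)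
    (hcomm : ∀ x y : L, mul x y = mul y x)
    (hone : ∀ x : L, mul x ⊤ = x)
    (hmono : ∀ a b c : L, a ≤ b → mul a c ≤ mul b c)
    (hadj : ∀ a b c : L, mul (a ⊔ b) (c ⊔ b) ≤ b ↔ c ⊔ b ≤ imp a b) :
    ∀ a b c : L, a ≤ b → imp b c ≤ imp a c := by
  -- first: c ≤ imp x c for all x
  have hle : ∀ x c : L, c ≤ imp x c := by
    intro x c
    have h1 : mul (x ⊔ c) (c ⊔ c) ≤ c := by
      have : mul (x ⊔ c) c ≤ mul ⊤ c := hmono _ _ _ le_top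
      rw [hcomm ⊤ c, hone] at this
      simpa using this
    have := (hadj x c c).mp h1
    simpa using this
  intro a b c hab
  have h1 : mul (b ⊔ c) (imp b c ⊔ c) ≤ c :=
    (hadj b c (imp b c)).mpr (sup_le le_rfl (hle b c))
  have h2 : mul (a ⊔ c) (imp b c ⊔ c) ≤ mul (b ⊔ c) (imp b c ⊔ c) :=
    hmono _ _ _ (sup_le_sup_right hab c)
  have h3 := (hadj a c (imp b c)).mp (h2.trans h1)
  exact le_trans le_sup_left h3
end

section
/- Every relatively residuated lattice (L,∨,∧,⊙,→,1) is congruence permutable: for any two congruences Θ and Φ on L, the relational compositions satisfy Θ∘Φ = Φ∘Θ. -/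
/-- A congruence on a relatively residuated lattice: an equivalence relation
compatible with ∨, ∧, ⊙ and →. -/
def IsRRLCongruence {L : Type*} [Lattice L] (mul imp : L → L → L)
    (Θ : L → L → Prop) : Prop :=
  Equivalence Θ ∧
    ∀ a b c d : L, Θ a b → Θ c d →
      Θ (a ⊔ c) (b ⊔ d) ∧ Θ (a ⊓ c) (b ⊓ d) ∧ Θ (mul a c) (mul b d) ∧ Θ (imp a c) (imp b d)

theorem stmt_11_aux {L : Type*} [Lattice L] [OrderTop L] (mul imp : L → L → L)
    (hcomm : ∀ x y : L, mul x y = mul y x)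
    (hone : ∀ x : L, mul x ⊤ = x)
    (hmono : ∀ a b c : L, a ≤ b → mul a c ≤ mul b c)
    (hadj : ∀ a b c : L, mul (a ⊔ b) (c ⊔ b) ≤ b ↔ c ⊔ b ≤ imp a b)
    (Θ Φ : L → L → Prop)
    (hΘ : IsRRLCongruence mul imp Θ) (hΦ : IsRRLCongruence mul imp Φ)
    (a b c : L) (hab : Θ a b) (hbc : Φ b c) :
    ∃ m : L, Φ a m ∧ Θ m c := by
  -- basic consequences of adjointness
  have L2 : ∀ x y : L, y ≤ imp x y := by
    intro x y
    have h : mul (x ⊔ y) (y ⊔ y) ≤ y := by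
      calc mul (x ⊔ y) (y ⊔ y) ≤ mul ⊤ (y ⊔ y) := hmono _ _ _ le_top
        _ = y ⊔ y := by rw [hcomm, hone]
        _ ≤ y := by simp
    simpa using (hadj x y y).mp h
  have L3 : ∀ x : L, imp x x = ⊤ := by
    intro x
    have h : mul (x ⊔ x) (⊤ ⊔ x) ≤ x := by
      simp only [sup_idem, top_sup_eq]
      rw [hone]
    have := (hadj x x ⊤).mp h
    simp only [top_sup_eq] at this
    exact top_le_iff.mp this
  have L4 : ∀ y : L, imp ⊤ y = y := by
    intro y
    refine le_antisymm ?_ (L2 ⊤ y)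
    have h : imp ⊤ y ⊔ y ≤ imp ⊤ y := sup_le le_rfl (L2 ⊤ y)
    have h2 := (hadj ⊤ y (imp ⊤ y)).mpr h
    calc imp ⊤ y ≤ imp ⊤ y ⊔ y := le_sup_left
      _ = mul (imp ⊤ y ⊔ y) ⊤ := (hone _).symm
      _ = mul ⊤ (imp ⊤ y ⊔ y) := hcomm _ _
      _ = mul (⊤ ⊔ y) (imp ⊤ y ⊔ y) := by rw [top_sup_eq]
      _ ≤ y := h2
  have L5 : ∀ x y : L, y ⊔ x ≤ imp (imp y x) x := by
    intro x y
    apply (hadj (imp y x) x y).mp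
    rw [hcomm]
    exact (hadj y x (imp y x)).mpr (sup_le le_rfl (L2 y x))
  -- the Maltsev term
    -- p x y z := imp (imp x y) z ⊓ imp (imp z y) x ⊓ (x ⊔ z)
  have hp1 : ∀ x y : L, imp (imp x y) y ⊓ imp (imp y y) x ⊓ (x ⊔ y) = x := by
    intro x y
    rw [L3, L4]
    refine le_antisymm (le_trans inf_le_left inf_le_right) ?_
    exact le_inf (le_inf (le_trans le_sup_left (L5 y x)) le_rfl) le_sup_left
  have hp2 : ∀ x y : L, imp (imp x x) y ⊓ imp (imp y x) x ⊓ (x ⊔ y) = y := by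
    intro x y
    rw [L3, L4]
    refine le_antisymm (le_trans inf_le_left inf_le_left) ?_
    exact le_inf (le_inf le_rfl (le_trans le_sup_left (L5 x y))) le_sup_right
  -- compatibility of the Maltsev term with a congruence
  have hcompat : ∀ (Ψ : L → L → Prop), IsRRLCongruence mul imp Ψ →
      ∀ x x' y y' z z' : L, Ψ x x' → Ψ y y' → Ψ z z' →
      Ψ (imp (imp x y) z ⊓ imp (imp z y) x ⊓ (x ⊔ z))
        (imp (imp x' y') z' ⊓ imp (imp z' y') x' ⊓ (x' ⊔ z')) := by
    intro Ψ hΨ x x' y y' z z' hx hy hz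
    have h1 : Ψ (imp x y) (imp x' y') := (hΨ.2 _ _ _ _ hx hy).2.2.2
    have h2 : Ψ (imp (imp x y) z) (imp (imp x' y') z') := (hΨ.2 _ _ _ _ h1 hz).2.2.2
    have h3 : Ψ (imp z y) (imp z' y') := (hΨ.2 _ _ _ _ hz hy).2.2.2
    have h4 : Ψ (imp (imp z y) x) (imp (imp z' y') x') := (hΨ.2 _ _ _ _ h3 hx).2.2.2
    have h5 : Ψ (imp (imp x y) z ⊓ imp (imp z y) x)
        (imp (imp x' y') z' ⊓ imp (imp z' y') x') := (hΨ.2 _ _ _ _ h2 h4).2.1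
    have h6 : Ψ (x ⊔ z) (x' ⊔ z') := (hΨ.2 _ _ _ _ hx hz).1
    exact (hΨ.2 _ _ _ _ h5 h6).2.1
  refine ⟨imp (imp a b) c ⊓ imp (imp c b) a ⊓ (a ⊔ c), ?_, ?_⟩
  · -- Φ a m : m = p a b c Φ p a c c = a
    have h := hcompat Φ hΦ a a b c c c (hΦ.1.refl a) hbc (hΦ.1.refl c)
    rw [hp1 a c] at h
    exact hΦ.1.symm h
  · -- Θ m c : m = p a b c Θ p b b c = c
    have h := hcompat Θ hΘ a b b b c c hab (hΘ.1.refl b) (hΘ.1.refl c)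
    rw [hp2 b c] at h
    exact h

/-- Every relatively residuated lattice is congruence permutable. -/
theorem stmt_11 {L : Type*} [Lattice L] [OrderTop L] (mul imp : L → L → L)
    (hcomm : ∀ x y : L, mul x y = mul y x)
    (hone : ∀ x : L, mul x ⊤ = x)
    (hmono : ∀ a b c : L, a ≤ b → mul a c ≤ mul b c)
    (hadj : ∀ a b c : L, mul (a ⊔ b) (c ⊔ b) ≤ b ↔ c ⊔ b ≤ imp a b)
    (Θ Φ : L → L → Prop)
    (hΘ : IsRRLCongruence mul imp Θ) (hΦ : IsRRLCongruence mul imp Φ) :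
    ∀ a c : L, (∃ b : L, Θ a b ∧ Φ b c) ↔ (∃ b : L, Φ a b ∧ Θ b c) := by
  intro a c
  constructor
  · rintro ⟨b, hab, hbc⟩
    exact stmt_11_aux mul imp hcomm hone hmono hadj Θ Φ hΘ hΦ a b c hab hbc
  · rintro ⟨b, hab, hbc⟩
    obtain ⟨m, h1, h2⟩ := stmt_11_aux mul imp hcomm hone hmono hadj Φ Θ hΦ hΘ a b c hab hbc
    exact ⟨m, h1, h2⟩
end

section
/- Every relatively residuated lattice (L,∨,∧,⊙,→,1) is weakly regular: if Θ and Φ are congruences on L such that the congruence class of 1 under Θ equals the congruence class of 1 under Φ, then Θ = Φ. -/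
lemma rrl_key {L : Type*} [Lattice L] [OrderTop L] (mul imp : L → L → L)
    (hcomm : ∀ x y : L, mul x y = mul y x)
    (hone : ∀ x : L, mul x ⊤ = x)
    (hmono : ∀ a b c : L, a ≤ b → mul a c ≤ mul b c)
    (hadj : ∀ a b c : L, mul (a ⊔ b) (c ⊔ b) ≤ b ↔ c ⊔ b ≤ imp a b)
    (Ψ : L → L → Prop) (hΨ : IsRRLCongruence mul imp Ψ) (a b : L) :
    Ψ a b ↔ (Ψ (imp a (a ⊓ b)) ⊤ ∧ Ψ (imp b (a ⊓ b)) ⊤) := by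
  obtain ⟨heq, hcompat⟩ := hΨ
  -- b ≤ imp a b
  have hle : ∀ x y : L, y ≤ imp x y := by
    intro x y
    have h1 : mul (x ⊔ y) (y ⊔ y) ≤ y := by
      rw [sup_idem]
      calc mul (x ⊔ y) y ≤ mul ⊤ y := hmono _ _ _ le_top
        _ = mul y ⊤ := hcomm ⊤ y
        _ = y := hone y
    have := (hadj x y y).mp h1
    simpa using this
  -- imp x x = ⊤
  have himp_self : ∀ x : L, imp x x = ⊤ := by
    intro x
    have h1 : mul (x ⊔ x) (⊤ ⊔ x) ≤ x := by
      simp [hone]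
    have := (hadj x x ⊤).mp h1
    exact le_antisymm le_top (le_trans le_sup_left this)
  -- mul x (imp x y) ≤ y  when y ≤ x (used with y = a ⊓ b)
  have hmul_imp : ∀ x y : L, y ≤ x → mul x (imp x y) ≤ y := by
    intro x y hxy
    have h1 : (imp x y) ⊔ y ≤ imp x y := sup_le le_rfl (hle x y)
    have h2 := (hadj x y (imp x y)).mpr h1
    have e1 : x ⊔ y = x := sup_eq_left.mpr hxy
    have e2 : imp x y ⊔ y = imp x y := sup_eq_left.mpr (hle x y)
    rwa [e1, e2] at h2
  constructor
  · intro hab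
    constructor
    · have h1 : Ψ a (a ⊓ b) := by
        have := (hcompat a a a b (heq.refl a) hab).2.1
        rwa [inf_idem] at this
      have h2 := (hcompat a a a (a ⊓ b) (heq.refl a) h1).2.2.2
      rw [himp_self] at h2
      exact heq.symm h2
    · have h1 : Ψ b (a ⊓ b) := by
        have := (hcompat b b b a (heq.refl b) (heq.symm hab)).2.1
        rw [inf_idem, inf_comm] at this
        exact this
      have h2 := (hcompat b b b (a ⊓ b) (heq.refl b) h1).2.2.2
      rw [himp_self] at h2
      exact heq.symm h2
  · rintro ⟨he, hf⟩
    -- Ψ (a ⊓ b) a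
    have step : ∀ x : L, Ψ (imp x (a ⊓ b)) ⊤ → a ⊓ b ≤ x → Ψ (a ⊓ b) x := by
      intro x hx hxle
      have h1 : Ψ (mul x (imp x (a ⊓ b))) (mul x ⊤) :=
        (hcompat x x _ ⊤ (heq.refl x) hx).2.2.1
      rw [hone] at h1
      have h2 : Ψ (mul x (imp x (a ⊓ b)) ⊔ (a ⊓ b)) (x ⊔ (a ⊓ b)) :=
        (hcompat _ x (a ⊓ b) (a ⊓ b) h1 (heq.refl _)).1
      have e1 : mul x (imp x (a ⊓ b)) ⊔ (a ⊓ b) = a ⊓ b :=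
        sup_eq_right.mpr (hmul_imp x (a ⊓ b) hxle)
      have e2 : x ⊔ (a ⊓ b) = x := sup_eq_left.mpr hxle
      rwa [e1, e2] at h2
    have ha := step a he inf_le_left
    have hb := step b hf inf_le_right
    exact heq.trans (heq.symm ha) hb

/-- Every relatively residuated lattice is weakly regular:
congruences with the same class of 1 coincide. -/
theorem stmt_12 {L : Type*} [Lattice L] [OrderTop L] (mul imp : L → L → L)
    (hcomm : ∀ x y : L, mul x y = mul y x)
    (hone : ∀ x : L, mul x ⊤ = x)
    (hmono : ∀ a b c : L, a ≤ b → mul a c ≤ mul b c)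
    (hadj : ∀ a b c : L, mul (a ⊔ b) (c ⊔ b) ≤ b ↔ c ⊔ b ≤ imp a b)
    (Θ Φ : L → L → Prop)
    (hΘ : IsRRLCongruence mul imp Θ) (hΦ : IsRRLCongruence mul imp Φ)
    (hker : {x : L | Θ x ⊤} = {x : L | Φ x ⊤}) :
    Θ = Φ := by
  have hker' : ∀ x : L, Θ x ⊤ ↔ Φ x ⊤ := fun x =>
    ⟨fun h => (Set.ext_iff.mp hker x).mp h, fun h => (Set.ext_iff.mp hker x).mpr h⟩
  funext a b
  apply propext
  rw [rrl_key mul imp hcomm hone hmono hadj Θ hΘ a b,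
      rrl_key mul imp hcomm hone hmono hadj Φ hΦ a b, hker', hker']
end

section
/- Let (L,∨,∧,1) be a lattice with greatest element 1 and let ⊙ and → be binary operations on L such that ⊙ is commutative with neutral element 1 (x⊙1 = x for all x), and for all a,b,c ∈ L: (i) ((a∨b)⊙(c∨b))→b ≤ (c∨b)→(a→b); (ii) (a∨b)⊙(a→b) ≤ b; (iii) a⊙b ≤ a⊙(b∨c); (iv) a→(a∨b) = 1. Then (L,∨,∧,⊙,→,1) is a relatively residuated lattice, i.e., ⊙ is monotone and relative adjointness holds: for all a,b,c ∈ L, (a∨b)⊙(c∨b) ≤ b if and only if c∨b ≤ a→b. -/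
/-- Under conditions (i)-(iv), (L,∨,∧,⊙,→,1) is a relatively
residuated lattice: ⊙ is monotone and relative adjointness holds. -/
theorem stmt_14 {L : Type*} [Lattice L] [OrderTop L] (mul imp : L → L → L)
    (hcomm : ∀ x y : L, mul x y = mul y x)
    (hone : ∀ x : L, mul x ⊤ = x)
    (h1 : ∀ a b c : L, imp (mul (a ⊔ b) (c ⊔ b)) b ≤ imp (c ⊔ b) (imp a b))
    (h2 : ∀ a b : L, mul (a ⊔ b) (imp a b) ≤ b)
    (h3 : ∀ a b c : L, mul a b ≤ mul a (b ⊔ c))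
    (h4 : ∀ a b : L, imp a (a ⊔ b) = ⊤) :
    (∀ a b c : L, a ≤ b → mul a c ≤ mul b c) ∧
      (∀ a b c : L, mul (a ⊔ b) (c ⊔ b) ≤ b ↔ c ⊔ b ≤ imp a b) := by
  have mono : ∀ a b c : L, a ≤ b → mul a c ≤ mul b c := by
    intro a b c hab
    calc mul a c = mul c a := hcomm a c
      _ ≤ mul c (a ⊔ b) := h3 c a b
      _ = mul c b := by rw [sup_eq_right.mpr hab]
      _ = mul b c := hcomm c b
  refine ⟨mono, fun a b c => ⟨fun h => ?_, fun h => ?_⟩⟩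
  · -- forward direction
    have hm : mul (a ⊔ b) (c ⊔ b) ⊔ b = b := sup_eq_right.mpr h
    have htop : imp (mul (a ⊔ b) (c ⊔ b)) b = ⊤ := by
      have := h4 (mul (a ⊔ b) (c ⊔ b)) b
      rwa [hm] at this
    have h1' := h1 a b c
    rw [htop] at h1'
    have htop2 : imp (c ⊔ b) (imp a b) = ⊤ := top_le_iff.mp h1'
    have h2' := h2 (c ⊔ b) (imp a b)
    rw [htop2, hone] at h2'
    exact le_trans le_sup_left h2'
  · -- backward direction
    have : mul (a ⊔ b) (c ⊔ b) ≤ mul (a ⊔ b) (imp a b) := by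
      have := h3 (a ⊔ b) (c ⊔ b) (imp a b)
      rwa [sup_eq_right.mpr h] at this
    exact le_trans this (h2 a b)
end

section
/- Let (P,≤,1) be a poset with greatest element 1 and * a binary operation on P, and define M(A,B) := L(A ∪ B) for all subsets A,B ⊆ P and R(x,y) := L({x*y}) for all x,y ∈ P. Then (P,≤,*) is a sectionally pseudocomplemented poset if and only if (P,≤,M,R,1) is a relatively operator residuated poset. -/
/-- With M(A,B) := L(A ∪ B) and R(x,y) := L({x*y}),
(P,≤,*) is sectionally pseudocomplemented iff (P,≤,M,R,1) is a relatively
operator residuated poset. -/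
theorem stmt_17 {P : Type*} [PartialOrder P] [OrderTop P] (star : P → P → P)
    (M : Set P → Set P → Set P) (R : P → P → Set P)
    (hM : ∀ A B : Set P, M A B = lowerBounds (A ∪ B))
    (hR : ∀ x y : P, R x y = lowerBounds {star x y}) :
    (∀ a b c : P,
        lowerBounds (upperBounds {a, b} ∪ upperBounds {c, b}) = lowerBounds {b} ↔
          star a b ∈ upperBounds ({c, b} : Set P)) ↔
      ((∀ A B : Set P, M A B = M B A) ∧
       (∀ A : Set P, M {⊤} A = lowerBounds A ∧ M A {⊤} = lowerBounds A) ∧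
       (∀ a b c : P,
          M (upperBounds {a, b}) (upperBounds {c, b}) ⊆ lowerBounds {b} ↔
            lowerBounds (upperBounds {c, b}) ⊆ R a b)) := by
  have hTop : ∀ A : Set P, lowerBounds ({⊤} ∪ A) = lowerBounds A := by
    intro A; ext x
    constructor
    · intro hx y hy; exact hx (Or.inr hy)
    · intro hx y hy
      rcases hy with hy | hy
      · rcases hy with rfl; exact le_top
      · exact hx hy
  have key : ∀ a b c : P, (star a b ∈ upperBounds ({c, b} : Set P)) ↔
      lowerBounds (upperBounds ({c, b} : Set P)) ⊆ lowerBounds {star a b} := by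
    intro a b c
    constructor
    · intro hs x hx y hy
      rcases hy with rfl; exact hx hs
    · intro hsub y hy
      rcases hy with rfl | hy
      · exact hsub (fun u hu => hu (Set.mem_insert _ _)) rfl
      · rcases hy with rfl
        exact hsub (fun u hu => hu (Or.inr rfl)) rfl
  have hLB : ∀ a b c : P, lowerBounds {b} ⊆
      lowerBounds (upperBounds ({a, b} : Set P) ∪ upperBounds ({c, b} : Set P)) := by
    intro a b c x hx y hy
    rcases hy with hy | hy
    · exact le_trans (hx rfl) (hy (Or.inr rfl))
    · exact le_trans (hx rfl) (hy (Or.inr rfl))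
  constructor
  · intro h
    refine ⟨?_, ?_, ?_⟩
    · intro A B; rw [hM, hM, Set.union_comm]
    · intro A
      refine ⟨?_, ?_⟩
      · rw [hM]; exact hTop A
      · rw [hM, Set.union_comm]; exact hTop A
    · intro a b c
      rw [hM, hR, ← key]
      constructor
      · intro hsub
        exact (h a b c).mp (Set.Subset.antisymm hsub (hLB a b c))
      · intro hs
        exact ((h a b c).mpr hs).le
  · rintro ⟨-, -, h3⟩ a b c
    have := h3 a b c
    rw [hM, hR, ← key] at this
    constructor
    · intro heq; exact this.mp heq.le
    · intro hs; exact Set.Subset.antisymm (this.mpr hs) (hLB a b c)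
end

section
/- Let (P,≤,M,R,1) be a relatively operator residuated poset and a,b ∈ P. Then: (i) L({a}) ⊆ R(1,a); (ii) a ≤ b if and only if R(a,b) = P; (iii) M(U({a}),U(a,b)) ⊆ L({a}); (iv) L({b}) ⊆ R(a,b); (v) if P has a least element 0, then M(U({a}),U({b})) ⊆ {0} if and only if L({a}) ⊆ R(b,0). -/
section aux
variable {P : Type*} [PartialOrder P]

lemma aux_pair_self (a : P) : ({a, a} : Set P) = {a} := by simp

lemma aux_LU_self (a : P) : lowerBounds (upperBounds ({a} : Set P)) = lowerBounds {a} := by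
  ext x
  constructor
  · intro hx y hy
    simp only [Set.mem_singleton_iff] at hy
    subst hy
    exact hx (by simp [upperBounds])
  · intro hx y hy
    exact le_trans (hx rfl) (hy rfl)

lemma aux_upper_pair (a b : P) : upperBounds ({a, b} : Set P) = Set.Ici a ∩ Set.Ici b := by
  rw [show ({a, b} : Set P) = insert a {b} from rfl, upperBounds_insert, upperBounds_singleton]

lemma aux_upper_top [OrderTop P] (x : P) : upperBounds ({⊤, x} : Set P) = {⊤} := by
  rw [aux_upper_pair]
  ext y
  simp only [Set.mem_inter_iff, Set.mem_Ici, Set.mem_singleton_iff]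
  constructor
  · rintro ⟨h, _⟩; exact le_antisymm le_top h
  · rintro rfl; exact ⟨le_refl _, le_top⟩

lemma aux_upper_bot [OrderBot P] (x : P) : upperBounds ({x, ⊥} : Set P) = upperBounds {x} := by
  rw [aux_upper_pair, upperBounds_singleton]
  ext y; simp

lemma aux_lower_bot [OrderBot P] : lowerBounds ({⊥} : Set P) = ({⊥} : Set P) := by
  ext x
  simp only [lowerBounds, Set.mem_setOf_eq, Set.mem_singleton_iff]
  constructor
  · intro h; exact le_antisymm (h rfl) bot_le
  · rintro rfl y hy; exact le_of_eq hy.symm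

lemma aux_lower_top [OrderTop P] : lowerBounds ({⊤} : Set P) = (Set.univ : Set P) := by
  ext x
  simp only [lowerBounds, Set.mem_setOf_eq, Set.mem_univ, iff_true]
  intro y hy; exact hy ▸ le_top

end aux

/-- Properties of relatively operator residuated posets. -/
theorem stmt_18 {P : Type*} [PartialOrder P] [OrderTop P]
    (M : Set P → Set P → Set P) (R : P → P → Set P)
    (hcomm : ∀ A B : Set P, M A B = M B A)
    (hone : ∀ A : Set P, M {⊤} A = lowerBounds A ∧ M A {⊤} = lowerBounds A)
    (hadj : ∀ a b c : P,
      M (upperBounds {a, b}) (upperBounds {c, b}) ⊆ lowerBounds {b} ↔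
        lowerBounds (upperBounds {c, b}) ⊆ R a b)
    (a b : P) :
    lowerBounds {a} ⊆ R ⊤ a ∧
    (a ≤ b ↔ R a b = Set.univ) ∧
    M (upperBounds {a}) (upperBounds {a, b}) ⊆ lowerBounds {a} ∧
    lowerBounds {b} ⊆ R a b ∧
    (∀ _ : OrderBot P,
      (M (upperBounds {a}) (upperBounds {b}) ⊆ {⊥} ↔ lowerBounds {a} ⊆ R b ⊥)) := by
  -- General fact (ii) for arbitrary x y : x ≤ y ↔ R x y = univ
  have key2 : ∀ x y : P, x ≤ y ↔ R x y = Set.univ := by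
    intro x y
    have h := hadj x y ⊤
    rw [aux_upper_top, (hone (upperBounds ({x, y} : Set P))).2, aux_lower_top] at h
    -- h : lowerBounds (upperBounds {x,y}) ⊆ lowerBounds {y} ↔ univ ⊆ R x y
    constructor
    · intro hxy
      have hsub : lowerBounds (upperBounds ({x, y} : Set P)) ⊆ lowerBounds {y} := by
        have : upperBounds ({x, y} : Set P) = upperBounds {y} := by
          rw [aux_upper_pair, upperBounds_singleton]
          ext z
          simp only [Set.mem_inter_iff, Set.mem_Ici]
          exact ⟨fun h => h.2, fun h => ⟨le_trans hxy h, h⟩⟩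
        rw [this, aux_LU_self]
      exact Set.eq_univ_of_univ_subset (h.mp hsub)
    · intro hR
      have hsub := h.mpr (hR ▸ subset_rfl)
      have hx : x ∈ lowerBounds (upperBounds ({x, y} : Set P)) := by
        intro z hz
        exact hz (by simp)
      have := hsub hx
      exact this rfl
  -- General fact (iv): lowerBounds {y} ⊆ R x y
  have key4 : ∀ x y : P, lowerBounds ({y} : Set P) ⊆ R x y := by
    intro x y
    have h := hadj x y y
    rw [aux_pair_self] at h
    -- need M (upperBounds {x,y}) (upperBounds {y}) ⊆ lowerBounds {y}
    have hMyy : M (upperBounds ({x, y} : Set P)) (upperBounds ({y} : Set P)) ⊆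
        lowerBounds ({y} : Set P) := by
      have h2 := hadj y y x
      rw [aux_pair_self, hcomm] at h2
      apply h2.mpr
      rw [(key2 y y).mp (le_refl y)]
      exact Set.subset_univ _
    have := h.mp hMyy
    rw [aux_LU_self] at this
    exact this
  refine ⟨?_, key2 a b, ?_, key4 a b, ?_⟩
  · -- (i)
    exact fun x hx => key4 ⊤ a hx
  · -- (iii)
    have h := hadj a a b
    rw [aux_pair_self] at h
    have : lowerBounds (upperBounds ({b, a} : Set P)) ⊆ R a a := by
      rw [(key2 a a).mp (le_refl a)]
      exact Set.subset_univ _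
    have h3 := h.mpr this
    rwa [Set.pair_comm b a] at h3
  · -- (v)
    intro hbot
    have h := hadj b ⊥ a
    rw [aux_upper_bot, aux_upper_bot, aux_LU_self, aux_lower_bot, hcomm] at h
    exact h
end
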